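/- Suppose s₀, s₁ : ℕ → ℝ≥0 satisfy: (i) s₀(n) ∼ A n^c for some A, c > 0, and (ii) for all d ≤ r ≤ n, s₀(r) ≥ (C(n−d,r−d)/C(n,r)) s₀(n) + (C(n−d−1,r−d)/C(n,r)) s₁(n). Then there exists n₀ such that s₁(n) < (d − c/4) s₀(n) for all n ≥ n₀. -/

import Mathlib

open Filter Topology Finset Nat

lemma aux_m (m k : ℕ) (hm : 1 ≤ m) : m * (m-1).choose k = (m - k) * m.choose k := by
  obtain ⟨p, rfl⟩ : ∃ p, m = p + 1 := ⟨m - 1, by omega⟩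
  simp only [Nat.add_sub_cancel]
  calc (p+1) * p.choose k = (p+1).choose (k+1) * (k+1) := (Nat.add_one_mul_choose_eq p k)
    _ = (p+1).choose k * (p+1-k) := Nat.choose_succ_right_eq (p+1) k
    _ = (p+1-k) * (p+1).choose k := mul_comm _ _

lemma aux_hc1 (d r n : ℕ) (h1 : d ≤ r) (h2 : r ≤ n) :
    (((n - d).choose (r - d) : ℝ) / (n.choose r : ℝ)) = (r.choose d : ℝ) / (n.choose d : ℝ) := by
  have e1 : ((n - d).choose (r - d) : ℝ)
      = ((n-d)! : ℝ) / (((r-d)! : ℝ) * (((n-d)-(r-d))! : ℝ)) := Nat.cast_choose ℝ (by omega)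
  have e2 : ((n).choose r : ℝ) = (n ! : ℝ) / ((r ! : ℝ) * ((n-r)! : ℝ)) := Nat.cast_choose ℝ h2
  have e3 : ((r).choose d : ℝ) = (r ! : ℝ) / ((d ! : ℝ) * ((r-d)! : ℝ)) := Nat.cast_choose ℝ h1
  have e4 : ((n).choose d : ℝ) = (n ! : ℝ) / ((d ! : ℝ) * ((n-d)! : ℝ)) :=
    Nat.cast_choose ℝ (h1.trans h2)
  have e5 : (n - d) - (r - d) = n - r := by omega
  rw [e1, e2, e3, e4, e5]
  have f : ∀ m : ℕ, ((m ! : ℕ) : ℝ) ≠ 0 := fun m => Nat.cast_ne_zero.mpr (Nat.factorial_ne_zero m)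
  field_simp

lemma aux_field1 (a b q u v : ℝ) (hq : q ≠ 0) (hu : u ≠ 0) (hv : v ≠ 0) :
    (a - q * b) / (q * (u / v)) = (v / u) * (a / q - b) := by
  field_simp

lemma aux_field2 (x q y s : ℝ) (hq : q ≠ 0) (hs : s ≠ 0) :
    x * (y / q - s) = (x * ((y / s) / q - 1)) * s := by
  field_simp

theorem stmt14 (d : ℕ) (hd : 2 ≤ d) (s₀ s₁ : ℕ → ℝ)
    (h0 : ∀ n, 0 ≤ s₀ n) (h1 : ∀ n, 0 ≤ s₁ n)
    (A c : ℝ) (hA : 0 < A) (hc : 0 < c)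
    (hasymp : Filter.Tendsto (fun n : ℕ => s₀ n / (A * (n : ℝ) ^ c)) Filter.atTop (nhds 1))
    (hsamp : ∀ r n : ℕ, d ≤ r → r ≤ n →
      s₀ r ≥ (((n - d).choose (r - d) : ℝ) / (n.choose r : ℝ)) * s₀ n
        + (((n - d - 1).choose (r - d) : ℝ) / (n.choose r : ℝ)) * s₁ n) :
    ∃ n₀ : ℕ, ∀ n ≥ n₀, s₁ n < ((d : ℝ) - c / 4) * s₀ n := by
  -- Step A: choose α ∈ (0,1) with good slope bound
  have hslope : Tendsto (fun x : ℝ => (x ^ (c - (d:ℝ)) - 1) / (1 - x)) (𝓝[<] (1:ℝ))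
      (𝓝 ((d:ℝ) - c)) := by
    have hderiv : HasDerivAt (fun x : ℝ => x ^ (c - (d:ℝ)))
        ((c - (d:ℝ)) * (1:ℝ) ^ (c - (d:ℝ) - 1)) 1 :=
      Real.hasDerivAt_rpow_const (Or.inl one_ne_zero)
    have h2 : Tendsto (slope (fun x : ℝ => x ^ (c - (d:ℝ))) 1) (𝓝[≠] (1:ℝ))
        (𝓝 (c - (d:ℝ))) := by
      have := hasDerivAt_iff_tendsto_slope.mp hderiv
      simpa [Real.one_rpow] using this
    have h3 : Tendsto (slope (fun x : ℝ => x ^ (c - (d:ℝ))) 1) (𝓝[<] (1:ℝ))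
        (𝓝 (c - (d:ℝ))) :=
      h2.mono_left (nhdsWithin_mono _ (fun x hx => ne_of_lt hx))
    have h4 := h3.neg
    rw [show -(c - (d:ℝ)) = (d:ℝ) - c by ring] at h4
    refine h4.congr (fun x => ?_)
    simp only [slope_def_field, Real.one_rpow]
    rw [← div_neg, neg_sub]
  obtain ⟨α, hα0, hα1, hαL⟩ : ∃ α : ℝ, 0 < α ∧ α < 1 ∧
      (α ^ (c - (d:ℝ)) - 1) / (1 - α) < (d:ℝ) - c / 4 := by
    have hlt : (d:ℝ) - c < (d:ℝ) - c/4 := by linarith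
    have hev := hslope.eventually_lt_const hlt
    have hmem : ∀ᶠ x in 𝓝[<] (1:ℝ), x ∈ Set.Ioo (0:ℝ) 1 :=
      Ioo_mem_nhdsLT_of_mem (Set.mem_Ioc.mpr ⟨zero_lt_one, le_refl 1⟩)
    obtain ⟨x, hx1, hx2⟩ := (hmem.and hev).exists
    exact ⟨x, hx1.1, hx1.2, hx2⟩
  -- Step B: the sample size function r
  set r : ℕ → ℕ := fun n => ⌈α * n⌉₊ with hr
  have hle : ∀ n : ℕ, α * n ≤ (r n : ℝ) := fun n => Nat.le_ceil _
  have hub : ∀ n : ℕ, (r n : ℝ) < α * n + 1 := fun n =>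
    Nat.ceil_lt_add_one (by positivity)
  have h_rtopR : Tendsto (fun n : ℕ => (r n : ℝ)) atTop atTop :=
    tendsto_atTop_mono hle (Tendsto.const_mul_atTop hα0 tendsto_natCast_atTop_atTop)
  have h_rtop : Tendsto r atTop atTop := tendsto_natCast_atTop_iff.mp h_rtopR
  have h_rdiv : Tendsto (fun n : ℕ => (r n : ℝ) / n) atTop (𝓝 α) := by
    have hup : Tendsto (fun n : ℕ => α + 1 / (n:ℝ)) atTop (𝓝 (α + 0)) :=
      tendsto_const_nhds.add tendsto_one_div_atTop_nhds_zero_nat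
    rw [add_zero] at hup
    refine tendsto_of_tendsto_of_tendsto_of_le_of_le' tendsto_const_nhds hup ?_ ?_
    · filter_upwards [eventually_ge_atTop 1] with n hn
      have hn' : (0:ℝ) < n := by exact_mod_cast hn
      rw [le_div_iff₀ hn']
      exact hle n
    · filter_upwards [eventually_ge_atTop 1] with n hn
      have hn' : (0:ℝ) < n := by exact_mod_cast hn
      rw [div_le_iff₀ hn']
      have := (hub n).le
      calc (r n : ℝ) ≤ α * n + 1 := this
        _ = (α + 1/(n:ℝ)) * n := by field_simp
  have h_rltn : ∀ᶠ n in atTop, r n < n := by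
    have h1a : Tendsto (fun n : ℕ => (1 - α) * n) atTop atTop :=
      Tendsto.const_mul_atTop (by linarith) tendsto_natCast_atTop_atTop
    filter_upwards [h1a.eventually_gt_atTop 1] with n hn
    have : (r n : ℝ) < n := by nlinarith [hub n]
    exact_mod_cast this
  have h_rged : ∀ᶠ n in atTop, d ≤ r n := h_rtop.eventually_ge_atTop d
  -- positivity of s₀ eventually
  have h_s0pos : ∀ᶠ n in atTop, 0 < s₀ n := by
    have h2 := hasymp.eventually_const_lt (by norm_num : (1:ℝ)/2 < 1)
    filter_upwards [h2, eventually_ge_atTop 1] with n hn hn1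
    have hX : 0 < A * (n:ℝ) ^ c := by
      have : (0:ℝ) < n := by exact_mod_cast hn1
      positivity
    have := div_pos_iff.mp (lt_trans (by norm_num) hn)
    rcases this with ⟨h, _⟩ | ⟨_, h⟩
    · exact h
    · linarith
  -- ratio of s₀ values
  have h_ratio : Tendsto (fun n : ℕ => s₀ (r n) / s₀ n) atTop (𝓝 (α ^ c)) := by
    have hu : Tendsto (fun n : ℕ => s₀ (r n) / (A * (r n : ℝ) ^ c)) atTop (𝓝 1) :=
      hasymp.comp h_rtop
    have hw : Tendsto (fun n : ℕ => ((r n : ℝ) / n) ^ c) atTop (𝓝 (α ^ c)) :=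
      h_rdiv.rpow_const (Or.inl (ne_of_gt hα0))
    have hcomb : Tendsto (fun n : ℕ =>
        (s₀ (r n) / (A * (r n : ℝ) ^ c)) * ((r n : ℝ) / n) ^ c / (s₀ n / (A * (n:ℝ) ^ c)))
        atTop (𝓝 (1 * α ^ c / 1)) := (hu.mul hw).div hasymp one_ne_zero
    rw [mul_comm, mul_one, div_one] at hcomb
    refine hcomb.congr' ?_
    filter_upwards [eventually_ge_atTop 1, h_rtop.eventually_ge_atTop 1, h_s0pos]
      with n hn hrn hs0
    have hnpos : (0:ℝ) < n := by exact_mod_cast hn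
    have hrpos : (0:ℝ) < r n := by exact_mod_cast hrn
    rw [Real.div_rpow hrpos.le hnpos.le]
    have hnc : (0:ℝ) < (n:ℝ) ^ c := Real.rpow_pos_of_pos hnpos c
    have hrc : (0:ℝ) < (r n : ℝ) ^ c := Real.rpow_pos_of_pos hrpos c
    field_simp
  -- Q and its limit
  set Q : ℕ → ℝ := fun n => ((r n).choose d : ℝ) / (n.choose d : ℝ) with hQdef
  have h_Q : Tendsto Q atTop (𝓝 (α ^ (d:ℕ))) := by
    have hfac : ∀ i ∈ Finset.range d, Tendsto
        (fun n : ℕ => ((r n : ℝ) - i) / ((n : ℝ) - i)) atTop (𝓝 α) := by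
      intro i _
      have hnum : Tendsto (fun n : ℕ => (r n : ℝ)/n - (i:ℝ)/n) atTop (𝓝 (α - 0)) :=
        h_rdiv.sub (tendsto_const_div_atTop_nhds_zero_nat (i:ℝ))
    
      have hden : Tendsto (fun n : ℕ => 1 - (i:ℝ)/n) atTop (𝓝 (1 - 0)) :=
        tendsto_const_nhds.sub (tendsto_const_div_atTop_nhds_zero_nat (i:ℝ))
      have := hnum.div hden (by norm_num)
      rw [sub_zero, sub_zero, div_one] at this
      refine this.congr' ?_
      filter_upwards [eventually_gt_atTop i] with n hn
      have hnpos : (0:ℝ) < n := by exact_mod_cast Nat.lt_of_le_of_lt (Nat.zero_le i) hn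
      have hni : (0:ℝ) < (n:ℝ) - i := by
        have : (i:ℝ) < n := by exact_mod_cast hn
        linarith
      simp only [Pi.div_apply]
      field_simp
  
    have hprod := tendsto_finset_prod (Finset.range d) hfac
    rw [Finset.prod_const, Finset.card_range] at hprod
    refine hprod.congr' ?_
    filter_upwards [h_rged, h_rltn] with n hrn hlt
    have hdn : d ≤ n := le_trans hrn hlt.le
    have cast_desc : ∀ m : ℕ, d ≤ m →
        ((m.descFactorial d : ℕ) : ℝ) = ∏ i ∈ Finset.range d, ((m : ℝ) - i) := by
      intro m hm
      rw [Nat.descFactorial_eq_prod_range, Nat.cast_prod]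
      exact Finset.prod_congr rfl fun i hi =>
        Nat.cast_sub (le_trans (Finset.mem_range.mp hi).le hm)
    have hch : ∀ m : ℕ, (m.choose d : ℝ) = ((m.descFactorial d : ℕ) : ℝ) / (d ! : ℝ) := by
      intro m
      rw [Nat.descFactorial_eq_factorial_mul_choose]
      push_cast
      field_simp
    show (∏ i ∈ Finset.range d, ((r n : ℝ) - i) / ((n : ℝ) - i)) = Q n
    rw [hQdef]
    simp only []
    rw [hch (r n), hch n, cast_desc (r n) hrn, cast_desc n hdn,
      div_div_div_cancel_right₀, Finset.prod_div_distrib]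
    exact_mod_cast Nat.factorial_ne_zero d
  -- the prefactor limit
  have h1α : (0:ℝ) < 1 - α := by linarith
  have h_frac : Tendsto (fun n : ℕ => ((n:ℝ) - d) / ((n:ℝ) - r n)) atTop
      (𝓝 ((1 - 0) / (1 - α))) := by
    have hnum : Tendsto (fun n : ℕ => 1 - (d:ℝ)/n) atTop (𝓝 (1 - 0)) :=
      tendsto_const_nhds.sub (tendsto_const_div_atTop_nhds_zero_nat (d:ℝ))
    have hden : Tendsto (fun n : ℕ => 1 - (r n : ℝ)/n) atTop (𝓝 (1 - α)) :=
      tendsto_const_nhds.sub h_rdiv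
    refine (hnum.div hden (ne_of_gt h1α)).congr' ?_
    filter_upwards [eventually_gt_atTop d, h_rltn] with n hdn hlt
    have hn0 : (0:ℝ) < n := by exact_mod_cast Nat.lt_of_le_of_lt (Nat.zero_le d) hdn
    have hrln : (r n : ℝ) < n := by exact_mod_cast hlt
    have hden1 : (1:ℝ) - (r n : ℝ)/n ≠ 0 := by
      have : (r n : ℝ)/n < 1 := (div_lt_one hn0).mpr hrln
      linarith
    have hden2 : (n:ℝ) - (r n : ℝ) ≠ 0 := by linarith
    simp only [Pi.div_apply]
    rw [div_eq_div_iff hden1 hden2]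
    field_simp
  -- the key pointwise inequality
  have h_key : ∀ᶠ n in atTop, s₁ n ≤ (((n:ℝ) - d) / ((n:ℝ) - r n)) * (s₀ (r n) / Q n - s₀ n) := by
    filter_upwards [h_rged, h_rltn] with n hrn hlt
    have hrlen : r n ≤ n := hlt.le
    have hdn : d < n := lt_of_le_of_lt hrn hlt
    have hs := hsamp (r n) n hrn hrlen
    have hc1 : (((n - d).choose (r n - d) : ℝ) / (n.choose (r n) : ℝ)) = Q n :=
      aux_hc1 d (r n) n hrn hrlen
    -- second coefficient
    have hnat : (n - d) * (n - d - 1).choose (r n - d) = (n - r n) * (n - d).choose (r n - d) := by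
      have := aux_m (n - d) (r n - d) (by omega)
      rwa [show n - d - (r n - d) = n - r n by omega] at this
    have hcastnd : ((n - d : ℕ) : ℝ) = (n:ℝ) - d := Nat.cast_sub hdn.le
    have hcastnr : ((n - r n : ℕ) : ℝ) = (n:ℝ) - r n := Nat.cast_sub hrlen
    have hndpos : (0:ℝ) < (n:ℝ) - d := by
      have : (d:ℝ) < n := by exact_mod_cast hdn
      linarith
    have hnrpos : (0:ℝ) < (n:ℝ) - r n := by
      have : (r n : ℝ) < n := by exact_mod_cast hlt
      linarith
    have hchnr : (0:ℝ) < (n.choose (r n) : ℝ) := by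
      exact_mod_cast Nat.choose_pos hrlen
    have hQpos : 0 < Q n := by
      rw [hQdef]
      have p1 : (0:ℝ) < ((r n).choose d : ℝ) := by exact_mod_cast Nat.choose_pos hrn
      have p2 : (0:ℝ) < (n.choose d : ℝ) := by exact_mod_cast Nat.choose_pos hdn.le
      positivity
    have hrealnat : ((n - d - 1).choose (r n - d) : ℝ) * ((n:ℝ) - d)
        = ((n:ℝ) - r n) * ((n - d).choose (r n - d) : ℝ) := by
      have := congrArg (fun m : ℕ => (m : ℝ)) hnat
      push_cast [hcastnd, hcastnr] at this
      linarith
    have hC2 : ((n - d - 1).choose (r n - d) : ℝ)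
        = ((n:ℝ) - r n) / ((n:ℝ) - d) * ((n - d).choose (r n - d) : ℝ) := by
      rw [div_mul_eq_mul_div, eq_div_iff (ne_of_gt hndpos)]
      linarith [hrealnat]
    have hc2 : (((n - d - 1).choose (r n - d) : ℝ) / (n.choose (r n) : ℝ))
        = Q n * (((n:ℝ) - r n) / ((n:ℝ) - d)) := by
      rw [hC2, mul_div_assoc, hc1, mul_comm]
    rw [ge_iff_le, hc1, hc2] at hs
    -- rearrange
    have e1 : Q n * (((n:ℝ) - r n) / ((n:ℝ) - d)) * s₁ n ≤ s₀ (r n) - Q n * s₀ n := by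
      linarith
    have hcoef : 0 < Q n * (((n:ℝ) - r n) / ((n:ℝ) - d)) := by positivity
    have e2 : s₁ n ≤ (s₀ (r n) - Q n * s₀ n) / (Q n * (((n:ℝ) - r n) / ((n:ℝ) - d))) := by
      rw [le_div_iff₀ hcoef]
      linarith [e1]
    refine e2.trans (le_of_eq ?_)
    exact aux_field1 _ _ _ _ _ (ne_of_gt hQpos) (ne_of_gt hnrpos) (ne_of_gt hndpos)
  -- combine limits
  have hT : Tendsto (fun n : ℕ => (((n:ℝ) - d) / ((n:ℝ) - r n)) * ((s₀ (r n) / s₀ n) / Q n - 1))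
      atTop (𝓝 (((1 - 0) / (1 - α)) * (α ^ c / α ^ (d:ℕ) - 1))) :=
    h_frac.mul ((h_ratio.div h_Q (pow_ne_zero _ (ne_of_gt hα0))).sub tendsto_const_nhds)
  have hLeq : ((1 - 0) / (1 - α)) * (α ^ c / α ^ (d:ℕ) - 1) = (α ^ (c - (d:ℝ)) - 1) / (1 - α) := by
    rw [← Real.rpow_natCast α d, ← Real.rpow_sub hα0]
    ring
  rw [hLeq] at hT
  have hTlt := hT.eventually_lt_const hαL
  have hfinal : ∀ᶠ n in atTop, s₁ n < ((d:ℝ) - c / 4) * s₀ n := by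
    filter_upwards [h_key, hTlt, h_s0pos, h_rged, h_rltn] with n hk hT' hs0 hrn hlt
    have hQpos : 0 < Q n := by
      rw [hQdef]
      have p1 : (0:ℝ) < ((r n).choose d : ℝ) := by exact_mod_cast Nat.choose_pos hrn
      have p2 : (0:ℝ) < (n.choose d : ℝ) := by
        exact_mod_cast Nat.choose_pos (le_trans hrn hlt.le)
      positivity
    have heq : (((n:ℝ) - d) / ((n:ℝ) - r n)) * (s₀ (r n) / Q n - s₀ n)
        = ((((n:ℝ) - d) / ((n:ℝ) - r n)) * ((s₀ (r n) / s₀ n) / Q n - 1)) * s₀ n :=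
      aux_field2 _ _ _ _ (ne_of_gt hQpos) (ne_of_gt hs0)
    calc s₁ n ≤ (((n:ℝ) - d) / ((n:ℝ) - r n)) * (s₀ (r n) / Q n - s₀ n) := hk
      _ = ((((n:ℝ) - d) / ((n:ℝ) - r n)) * ((s₀ (r n) / s₀ n) / Q n - 1)) * s₀ n := heq
      _ < ((d:ℝ) - c / 4) * s₀ n := by
          exact mul_lt_mul_of_pos_right hT' hs0
  exact eventually_atTop.mp hfinal
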